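/- The map ρ(λ, b) = |λ| + b − 1 is a rank function on the poset M^1(n) of pairs (λ, b) with λ a nonempty partition with distinct parts each at most n and 1 ≤ b ≤ ℓ(λ), ordered componentwise: (λ, b) ≤ (λ', b') iff λ_i ≤ λ'_i for all i (padding with zeros) and b ≤ b'. -/

import Mathlib

/-- The `i`-th part (0-indexed) of a partition with distinct parts encoded as a finset,
with parts listed in decreasing order and padded with zeros. -/
def partOf (S : Finset ℕ) (i : ℕ) : ℕ := ((S.sort (· ≤ ·)).reverse).getD i 0

lemma length_rev (S : Finset ℕ) : ((S.sort (· ≤ ·)).reverse).length = S.card := by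
  rw [List.length_reverse, Finset.length_sort]

lemma rev_pairwise (S : Finset ℕ) :
    List.Pairwise (· > ·) ((S.sort (· ≤ ·)).reverse) := by
  rw [List.pairwise_reverse]
  exact ((S.pairwise_sort (· ≤ ·)).and (S.sort_nodup _)).imp (fun h => lt_of_le_of_ne h.1 h.2)

lemma partOf_eq_getElem (S : Finset ℕ) {i : ℕ} (h : i < S.card) :
    partOf S i = ((S.sort (· ≤ ·)).reverse)[i]'(by rw [length_rev]; exact h) := by
  unfold partOf
  exact List.getD_eq_getElem _ _ _

lemma partOf_eq_zero (S : Finset ℕ) {i : ℕ} (h : S.card ≤ i) : partOf S i = 0 := by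
  unfold partOf
  exact List.getD_eq_default _ _ (by rw [length_rev]; exact h)

lemma partOf_mem (S : Finset ℕ) {i : ℕ} (h : i < S.card) : partOf S i ∈ S := by
  rw [partOf_eq_getElem S h]
  have := List.getElem_mem (l := (S.sort (· ≤ ·)).reverse) (n := i)
    (by rw [length_rev]; exact h)
  rw [List.mem_reverse, Finset.mem_sort] at this
  exact this

lemma partOf_strict (S : Finset ℕ) {i j : ℕ} (hij : i < j) (hj : j < S.card) :
    partOf S j < partOf S i := by
  rw [partOf_eq_getElem S hj, partOf_eq_getElem S (hij.trans hj)]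
  have hs : List.Pairwise (· > ·) ((S.sort (· ≤ ·)).reverse) := rev_pairwise S
  have := hs.rel_get_of_lt
    (a := ⟨i, by rw [length_rev]; exact hij.trans hj⟩)
    (b := ⟨j, by rw [length_rev]; exact hj⟩) (by exact hij)
  simpa using this

lemma partOf_anti (S : Finset ℕ) {i j : ℕ} (hij : i ≤ j) :
    partOf S j ≤ partOf S i := by
  rcases eq_or_lt_of_le hij with rfl | h
  · exact le_refl _
  rcases lt_or_ge j S.card with hj | hj
  · exact (partOf_strict S h hj).le
  · rw [partOf_eq_zero S hj]; exact Nat.zero_le _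

lemma partOf_pos {S : Finset ℕ} (hS : ∀ a ∈ S, 1 ≤ a) {i : ℕ} (h : i < S.card) :
    1 ≤ partOf S i := hS _ (partOf_mem S h)

lemma sum_partOf (S : Finset ℕ) : S.sum id = ∑ i ∈ Finset.range S.card, partOf S i := by
  have h1 : S.sum id = ((S.sort (· ≤ ·)).reverse).sum := by
    have := List.sum_toFinset (id : ℕ → ℕ) (S.sort_nodup (· ≤ ·))
    rw [Finset.sort_toFinset] at this
    rw [this, List.map_id, ← List.sum_reverse]
  rw [h1]
  set L := (S.sort (· ≤ ·)).reverse with hL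
  conv_lhs => rw [← List.ofFn_get L]
  rw [List.sum_ofFn]
  have : ∀ i : Fin L.length, L.get i = partOf S i := by
    intro i
    rw [partOf_eq_getElem S (by rw [← length_rev S]; exact i.2)]
    rfl
  calc ∑ i : Fin L.length, L.get i = ∑ i : Fin L.length, partOf S i :=
        Finset.sum_congr rfl (fun i _ => this i)
    _ = ∑ i ∈ Finset.range L.length, partOf S i :=
        Fin.sum_univ_eq_sum_range (fun i => partOf S i) L.length
    _ = _ := by rw [length_rev]

lemma card_le_of_partOf_le {S T : Finset ℕ} (hS : ∀ a ∈ S, 1 ≤ a)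
    (h : ∀ i, partOf S i ≤ partOf T i) : S.card ≤ T.card := by
  by_contra hc
  push_neg at hc
  have h1 := partOf_pos hS (i := T.card) hc
  have h2 := partOf_eq_zero T (le_refl T.card)
  have h3 := h T.card
  omega

lemma sum_le_of_partOf_le {S T : Finset ℕ} (hS : ∀ a ∈ S, 1 ≤ a)
    (h : ∀ i, partOf S i ≤ partOf T i) : S.sum id ≤ T.sum id := by
  have hc := card_le_of_partOf_le hS h
  rw [sum_partOf, sum_partOf]
  have : ∑ i ∈ Finset.range S.card, partOf S i = ∑ i ∈ Finset.range T.card, partOf S i := by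
    apply Finset.sum_subset (Finset.range_subset_range.mpr hc)
    intro i _ hi
    rw [Finset.mem_range] at hi
    exact partOf_eq_zero S (by omega)
  rw [this]
  exact Finset.sum_le_sum (fun i _ => h i)

lemma partOf_injective {S T : Finset ℕ} (h : ∀ i, partOf S i = partOf T i)
    (hS : ∀ a ∈ S, 1 ≤ a) (hT : ∀ a ∈ T, 1 ≤ a) : S = T := by
  have hc : S.card = T.card :=
    le_antisymm (card_le_of_partOf_le hS (fun i => (h i).le))
      (card_le_of_partOf_le hT (fun i => (h i).ge))
  have hl : (S.sort (· ≤ ·)).reverse = (T.sort (· ≤ ·)).reverse := by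
    apply List.ext_getElem (by rw [length_rev, length_rev, hc])
    intro i h1 h2
    rw [length_rev] at h1 h2
    rw [← partOf_eq_getElem S h1, ← partOf_eq_getElem T h2]
    exact h i
  have := congrArg (fun l : List ℕ => l.toFinset) hl
  simpa [List.toFinset_reverse, Finset.sort_toFinset] using this

lemma sum_lt_of_ne {S T : Finset ℕ} (h : ∀ i, partOf S i ≤ partOf T i)
    (hS : ∀ a ∈ S, 1 ≤ a) (hT : ∀ a ∈ T, 1 ≤ a) (hne : S ≠ T) :
    S.sum id < T.sum id := by
  rcases lt_or_ge (S.sum id) (T.sum id) with h' | h'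
  · exact h'
  exfalso
  have hle := sum_le_of_partOf_le hS h
  have heq : S.sum id = T.sum id := le_antisymm hle h'
  apply hne
  apply partOf_injective _ hS hT
  intro i
  by_contra hne'
  have hi : partOf S i < partOf T i := lt_of_le_of_ne (h i) hne'
  have hic : i < T.card := by
    by_contra hic
    push_neg at hic
    rw [partOf_eq_zero T hic] at hi
    omega
  have : ∑ j ∈ Finset.range T.card, partOf S j < ∑ j ∈ Finset.range T.card, partOf T j := by
    apply Finset.sum_lt_sum (fun j _ => h j)
    exact ⟨i, Finset.mem_range.mpr hic, hi⟩
  have hext : S.sum id = ∑ j ∈ Finset.range T.card, partOf S j := by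
    rw [sum_partOf]
    apply Finset.sum_subset (Finset.range_subset_range.mpr (card_le_of_partOf_le hS h))
    intro j _ hj
    rw [Finset.mem_range] at hj
    exact partOf_eq_zero S (by omega)
  rw [← hext, ← sum_partOf] at this
  omega

lemma ofList_spec (L : List ℕ) (hp : List.Pairwise (· > ·) L) :
    L.toFinset.card = L.length ∧ (∀ j, partOf L.toFinset j = L.getD j 0) ∧
      L.toFinset.sum id = L.sum := by
  have hnd : L.Nodup := List.Pairwise.imp (fun h => ne_of_gt h) hp
  have hsortrev : List.Pairwise (· ≤ ·) L.reverse := by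
    rw [List.pairwise_reverse]
    exact List.Pairwise.imp (fun h => le_of_lt h) hp
  have hkey : L.toFinset.sort (· ≤ ·) = L.reverse := by
    apply List.Perm.eq_of_pairwise' (Finset.pairwise_sort _ _) hsortrev
    apply List.perm_of_nodup_nodup_toFinset_eq (Finset.sort_nodup _ _)
      (by rwa [List.nodup_reverse])
    rw [Finset.sort_toFinset, List.toFinset_reverse]
  refine ⟨?_, ?_, ?_⟩
  · rw [← Finset.length_sort (· ≤ ·), hkey, List.length_reverse]
  · intro j
    unfold partOf
    rw [hkey, List.reverse_reverse]
  · rw [List.sum_toFinset _ hnd, List.map_id]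

lemma exists_mid {n : ℕ} {S T : Finset ℕ} (hS : ∀ a ∈ S, 1 ≤ a ∧ a ≤ n)
    (hT : ∀ a ∈ T, 1 ≤ a ∧ a ≤ n) (hSne : S.Nonempty)
    (h1 : ∀ i, partOf S i ≤ partOf T i) (hne : S ≠ T) :
    ∃ ν : Finset ℕ, ν.Nonempty ∧ (∀ a ∈ ν, 1 ≤ a ∧ a ≤ n) ∧ S.card ≤ ν.card ∧
      (∀ i, partOf S i ≤ partOf ν i) ∧ (∀ i, partOf ν i ≤ partOf T i) ∧
      ν.sum id = S.sum id + 1 := by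
  have hS1 : ∀ a ∈ S, 1 ≤ a := fun a ha => (hS a ha).1
  have hT1 : ∀ a ∈ T, 1 ≤ a := fun a ha => (hT a ha).1
  have hex : ∃ i, partOf S i < partOf T i := by
    by_contra hc
    push_neg at hc
    exact hne (partOf_injective (fun i => le_antisymm (h1 i) (hc i)) hS1 hT1)
  classical
  set I := Nat.find hex with hI
  have hIlt : partOf S I < partOf T I := Nat.find_spec hex
  have hImin : ∀ j < I, partOf S j = partOf T j := by
    intro j hj
    have := Nat.find_min hex hj
    exact le_antisymm (h1 j) (by omega)
  have hIT : I < T.card := by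
    by_contra hc
    push_neg at hc
    rw [partOf_eq_zero T hc] at hIlt
    omega
  have hIS : I ≤ S.card := by
    by_contra hc
    push_neg at hc
    have h2 : partOf S S.card = partOf T S.card := hImin _ hc
    rw [partOf_eq_zero S (le_refl _)] at h2
    have : T.card ≤ S.card := by
      by_contra hc2
      push_neg at hc2
      have := partOf_pos hT1 hc2
      omega
    omega
  have hcard1 : 1 ≤ S.card := Finset.card_pos.mpr hSne
  set v := partOf S I with hv
  set w := partOf T I with hw
  have hwn : w ≤ n := (hT w (partOf_mem T hIT)).2
  have hw1 : 1 ≤ w := by omega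
  set L := (S.sort (· ≤ ·)).reverse with hLdef
  have hlen : L.length = S.card := length_rev S
  have hLget : ∀ j (hj : j < S.card), L[j]'(by omega) = partOf S j :=
    fun j hj => (partOf_eq_getElem S hj).symm
  rcases lt_or_eq_of_le hIS with hIS' | hIS'
  · -- case I < S.card : replace part v by v+1
    set L' := L.set I (v + 1) with hL'
    have hlen' : L'.length = S.card := by rw [hL', List.length_set, hlen]
    have hp' : List.Pairwise (· > ·) L' := by
      rw [List.pairwise_iff_getElem]
      intro j k hj hk hjk
      rw [hlen'] at hj hk
      simp only [hL', List.getElem_set]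
      rcases eq_or_ne I j with rfl | hIj
      · rw [if_pos rfl, if_neg (show ¬ I = k by omega), hLget k hk]
        have := partOf_strict S hjk hk
        omega
      · rcases eq_or_ne I k with rfl | hIk
        · rw [if_neg hIj, if_pos rfl, hLget j hj]
          have e1 : partOf S j = partOf T j := hImin j hjk
          have e2 : partOf T I < partOf T j := partOf_strict T hjk hIT
          omega
        · rw [if_neg hIj, if_neg hIk, hLget j hj, hLget k hk]
          exact partOf_strict S hjk hk
    obtain ⟨hcard, hpart, hsum⟩ := ofList_spec L' hp'
    set ν := L'.toFinset with hν
    have hνcard : ν.card = S.card := by rw [hcard, hlen']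
    have hνpart : ∀ j, partOf ν j = if j = I then v + 1 else partOf S j := by
      intro j
      rw [hpart j]
      rcases lt_or_ge j S.card with hj | hj
      · rw [List.getD_eq_getElem _ _ (by omega)]
        simp only [hL', List.getElem_set]
        rcases eq_or_ne j I with rfl | hji
        · simp
        · rw [if_neg (by omega), if_neg hji, hLget j hj]
      · rw [List.getD_eq_default _ _ (by omega), if_neg (by omega),
          partOf_eq_zero S hj]
    have hνsum : ν.sum id = S.sum id + 1 := by
      rw [sum_partOf ν, sum_partOf S, hνcard]
      have hmem : I ∈ Finset.range S.card := Finset.mem_range.mpr hIS'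
      rw [← Finset.add_sum_erase _ _ hmem, ← Finset.add_sum_erase _ (partOf S) hmem]
      rw [hνpart I, if_pos rfl]
      have : ∑ x ∈ (Finset.range S.card).erase I, partOf ν x
          = ∑ x ∈ (Finset.range S.card).erase I, partOf S x := by
        apply Finset.sum_congr rfl
        intro x hx
        rw [hνpart x, if_neg (Finset.ne_of_mem_erase hx)]
      omega
    refine ⟨ν, ?_, ?_, by omega, ?_, ?_, hνsum⟩
    · rw [← Finset.card_pos, hνcard]; omega
    · intro a ha
      rw [hν, List.mem_toFinset] at ha
      rcases List.mem_or_eq_of_mem_set ha with ha | rfl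
      · exact hS a (by rwa [hLdef, List.mem_reverse, Finset.mem_sort] at ha)
      · constructor <;> omega
    · intro j
      rw [hνpart j]
      rcases eq_or_ne j I with rfl | hj
      · rw [if_pos rfl]; omega
      · rw [if_neg hj]
    · intro j
      rw [hνpart j]
      rcases eq_or_ne j I with rfl | hj
      · rw [if_pos rfl]; omega
      · rw [if_neg hj]; exact h1 j
  · -- case I = S.card : append a part 1
    have hv0 : v = 0 := by rw [hv, hIS']; exact partOf_eq_zero S (le_refl _)
    have hbig : 2 ≤ partOf S (S.card - 1) := by
      have hj : S.card - 1 < I := by omega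
      have e1 : partOf S (S.card - 1) = partOf T (S.card - 1) := hImin _ hj
      have e2 : partOf T I < partOf T (S.card - 1) := partOf_strict T hj hIT
      omega
    set L' := L ++ [1] with hL'
    have hlen' : L'.length = S.card + 1 := by
      rw [hL', List.length_append, hlen]; rfl
    have hp' : List.Pairwise (· > ·) L' := by
      rw [hL', List.pairwise_append]
      refine ⟨rev_pairwise S, List.pairwise_singleton _ _, ?_⟩
      intro a ha b hb
      rw [List.mem_singleton] at hb
      subst hb
      rw [List.mem_iff_getElem] at ha
      obtain ⟨j, hj, rfl⟩ := ha
      rw [hlen] at hj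
      rw [hLget j hj]
      have := partOf_anti S (show j ≤ S.card - 1 by omega)
      omega
    obtain ⟨hcard, hpart, hsum⟩ := ofList_spec L' hp'
    set ν := L'.toFinset with hν
    have hνcard : ν.card = S.card + 1 := by rw [hcard, hlen']
    have hνpart : ∀ j, partOf ν j =
        if j < S.card then partOf S j else if j = S.card then 1 else 0 := by
      intro j
      rw [hpart j]
      rcases lt_or_ge j S.card with hj | hj
      · rw [List.getD_eq_getElem _ _ (by omega), if_pos hj]
        simp only [hL', List.getElem_append]
        rw [dif_pos (show j < L.length by omega), hLget j hj]
      · rcases eq_or_ne j S.card with rfl | hj2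
        · rw [List.getD_eq_getElem _ _ (by omega), if_neg (by omega), if_pos rfl]
          simp only [hL', List.getElem_append]
          rw [dif_neg (show ¬ S.card < L.length by omega)]
          simp [hlen]
        · rw [List.getD_eq_default _ _ (by omega), if_neg (by omega), if_neg hj2]
    have hνsum : ν.sum id = S.sum id + 1 := by
      rw [sum_partOf ν, sum_partOf S, hνcard, Finset.sum_range_succ]
      have : ∑ x ∈ Finset.range S.card, partOf ν x
          = ∑ x ∈ Finset.range S.card, partOf S x := by
        apply Finset.sum_congr rfl
        intro x hx
        rw [Finset.mem_range] at hx
        rw [hνpart x, if_pos hx]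
      rw [this, hνpart S.card, if_neg (by omega), if_pos rfl]
    refine ⟨ν, ?_, ?_, by omega, ?_, ?_, hνsum⟩
    · rw [← Finset.card_pos, hνcard]; omega
    · intro a ha
      rw [hν, List.mem_toFinset, hL', List.mem_append] at ha
      rcases ha with ha | ha
      · exact hS a (by rwa [hLdef, List.mem_reverse, Finset.mem_sort] at ha)
      · rw [List.mem_singleton] at ha
        subst ha
        constructor <;> omega
    · intro j
      rw [hνpart j]
      rcases lt_or_ge j S.card with hj | hj
      · rw [if_pos hj]
      · rw [if_neg (by omega), partOf_eq_zero S hj]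
        split <;> omega
    · intro j
      rw [hνpart j]
      rcases lt_or_ge j S.card with hj | hj
      · rw [if_pos hj]; exact h1 j
      · rcases eq_or_ne j S.card with rfl | hj2
        · rw [if_neg (by omega), if_pos rfl, ← hIS']
          omega
        · rw [if_neg (by omega), if_neg hj2]
          omega

/-- The carrier of the poset `M¹(n)`: pairs `(λ, b)` with `λ` a nonempty partition with
distinct parts each at most `n`, and `1 ≤ b ≤ ℓ(λ)`. -/
def M1 (n : ℕ) :=
  {x : Finset ℕ × ℕ // x.1.Nonempty ∧ (∀ a ∈ x.1, 1 ≤ a ∧ a ≤ n) ∧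
    1 ≤ x.2 ∧ x.2 ≤ x.1.card}

/-- The componentwise order on `M¹(n)`: `(λ, b) ≤ (λ', b')` iff `λ_i ≤ λ'_i` for all `i`
(padding with zeros) and `b ≤ b'`. -/
def M1le {n : ℕ} (p q : M1 n) : Prop :=
  (∀ i, partOf p.1.1 i ≤ partOf q.1.1 i) ∧ p.1.2 ≤ q.1.2

lemma M1.pos {n : ℕ} (p : M1 n) : ∀ a ∈ p.1.1, 1 ≤ a := fun a ha => (p.2.2.1 a ha).1

lemma M1.sum_pos {n : ℕ} (p : M1 n) : 1 ≤ p.1.1.sum id := by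
  obtain ⟨a, ha⟩ := p.2.1
  calc 1 ≤ a := p.pos a ha
    _ ≤ p.1.1.sum id := Finset.single_le_sum (fun b _ => Nat.zero_le (id b)) ha

lemma M1.ext {n : ℕ} {p q : M1 n} (h1 : p.1.1 = q.1.1) (h2 : p.1.2 = q.1.2) : p = q := by
  apply Subtype.ext
  exact Prod.ext h1 h2

lemma rho_strict {n : ℕ} (p q : M1 n) (h : M1le q p) (hne : q ≠ p) :
    q.1.1.sum id + q.1.2 < p.1.1.sum id + p.1.2 := by
  have hsum := sum_le_of_partOf_le q.pos h.1
  rcases lt_or_eq_of_le h.2 with hb | hb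
  · omega
  have hSne : q.1.1 ≠ p.1.1 := by
    intro he
    exact hne (M1.ext he hb)
  have := sum_lt_of_ne h.1 q.pos p.pos hSne
  omega

/-- `ρ(λ, b) = |λ| + b - 1` is a rank function on `M¹(n)`: it is order preserving and
increases by exactly one along covering relations. -/
theorem stmt_19 (n : ℕ) :
    (∀ p q : M1 n, M1le p q → p.1.1.sum id + p.1.2 - 1 ≤ q.1.1.sum id + q.1.2 - 1) ∧
    (∀ p q : M1 n,
      (M1le q p ∧ q ≠ p ∧ ¬∃ r : M1 n, (M1le q r ∧ q ≠ r) ∧ (M1le r p ∧ r ≠ p)) →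
        p.1.1.sum id + p.1.2 - 1 = (q.1.1.sum id + q.1.2 - 1) + 1) := by
  constructor
  · rintro p q ⟨h1, h2⟩
    have := sum_le_of_partOf_le p.pos h1
    omega
  · rintro p q ⟨hle, hne, hnex⟩
    have hstrict := rho_strict p q hle hne
    have hq1 := q.sum_pos
    have hp1 := p.sum_pos
    have hqb := q.2.2.2.1
    have hpb := p.2.2.2.1
    suffices hsuff : p.1.1.sum id + p.1.2 ≤ q.1.1.sum id + q.1.2 + 1 by omega
    by_contra hgap
    push_neg at hgap
    apply hnex
    rcases eq_or_ne q.1.1 p.1.1 with hST | hST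
    · -- same partition, b jumps by ≥ 2
      have hsum : q.1.1.sum id = p.1.1.sum id := by rw [hST]
      have hb : q.1.2 + 2 ≤ p.1.2 := by omega
      have hbc : q.1.2 + 1 ≤ p.1.1.card := le_trans (by omega) p.2.2.2.2
      refine ⟨⟨(q.1.1, q.1.2 + 1), q.2.1, q.2.2.1, by omega, by rw [hST]; omega⟩,
        ⟨⟨fun i => le_refl _, Nat.le_succ _⟩, ?_⟩,
        ⟨⟨fun i => by rw [hST], show q.1.2 + 1 ≤ p.1.2 by omega⟩, ?_⟩⟩
      · intro he
        have h2 : q.1.2 = q.1.2 + 1 := congrArg (fun r : M1 n => r.1.2) he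
        omega
      · intro he
        have h2 : q.1.2 + 1 = p.1.2 := congrArg (fun r : M1 n => r.1.2) he
        omega
    · rcases lt_or_eq_of_le hle.2 with hb | hb
      · -- b increases and partition changes: insert (T, bq) in between
        refine ⟨⟨(p.1.1, q.1.2), p.2.1, p.2.2.1, by omega,
            le_trans (le_of_lt hb) p.2.2.2.2⟩,
          ⟨⟨hle.1, le_refl _⟩, ?_⟩,
          ⟨⟨fun i => le_refl _, show q.1.2 ≤ p.1.2 from hle.2⟩, ?_⟩⟩
        · intro he
          have h2 := congrArg (fun r : M1 n => r.1.1) he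
          exact hST h2
        · intro he
          have h2 := congrArg (fun r : M1 n => r.1.2) he
          exact absurd h2 (show q.1.2 ≠ p.1.2 by omega)
      · -- b constant, partition jumps by ≥ 2
        have hgap2 : q.1.1.sum id + 2 ≤ p.1.1.sum id := by omega
        obtain ⟨ν, hν1, hν2, hν3, hν4, hν5, hν6⟩ :=
          exists_mid q.2.2.1 p.2.2.1 q.2.1 hle.1 hST
        refine ⟨⟨(ν, q.1.2), hν1, hν2, by omega, le_trans q.2.2.2.2 hν3⟩,
          ⟨⟨hν4, le_refl _⟩, ?_⟩,
          ⟨⟨hν5, show q.1.2 ≤ p.1.2 from hle.2⟩, ?_⟩⟩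
        · intro he
          have h2 : q.1.1.sum id = ν.sum id := congrArg (fun r : M1 n => r.1.1.sum id) he
          omega
        · intro he
          have h2 : ν.sum id = p.1.1.sum id := congrArg (fun r : M1 n => r.1.1.sum id) he
          omega
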